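/- Define on the half-plane Ω = {(x,y) ∈ ℝ² : x > 0} the functions u(x,y) = 2y, f(x,y) = x², p(x,y) = −x². Then (subscripts denoting partial derivatives): f_xx + f_yy − f_x/x = 0, p_x = (f_y² − f_x²)/(2x), p_y = −f_x f_y/x, f_x = x·u_y, f_y = −x·u_x, p_x = −(f_x² − f_y²)/(2x), p_y = −f_x f_y/x, and the dust density ρ = (f_x² + f_y²)/(x²·e^p) equals 4·e^{x²}. -/

import Mathlib

/-- Partial derivative with respect to the first coordinate of `ℝ × ℝ`. -/
noncomputable def pdx (f : ℝ × ℝ → ℝ) (p : ℝ × ℝ) : ℝ := fderiv ℝ f p (1, 0)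

/-- Partial derivative with respect to the second coordinate of `ℝ × ℝ`. -/
noncomputable def pdy (f : ℝ × ℝ → ℝ) (p : ℝ × ℝ) : ℝ := fderiv ℝ f p (0, 1)

lemma hasf_sq (q : ℝ × ℝ) :
    HasFDerivAt (fun p : ℝ × ℝ => p.1 ^ 2)
      ((2 * q.1) • (ContinuousLinearMap.fst ℝ ℝ ℝ)) q := by
  have h := (hasFDerivAt_fst (𝕜 := ℝ) (p := q)).mul (hasFDerivAt_fst (𝕜 := ℝ) (p := q))
  convert h using 1 <;> try rfl
  · funext p; simp [sq]
  · ext v <;> simp <;> ring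

lemma hasf_nsq (q : ℝ × ℝ) :
    HasFDerivAt (fun p : ℝ × ℝ => -p.1 ^ 2)
      ((-(2 * q.1)) • (ContinuousLinearMap.fst ℝ ℝ ℝ)) q := by
  have h := (hasf_sq q).neg
  convert h using 1 <;> try rfl
  ext v <;> simp

lemma hasf_2y (q : ℝ × ℝ) :
    HasFDerivAt (fun p : ℝ × ℝ => 2 * p.2)
      ((2:ℝ) • (ContinuousLinearMap.snd ℝ ℝ ℝ)) q :=
  (hasFDerivAt_snd (𝕜 := ℝ) (p := q)).const_mul 2

lemma hasf_lin (c : ℝ) (q : ℝ × ℝ) :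
    HasFDerivAt (fun p : ℝ × ℝ => c * p.1)
      (c • (ContinuousLinearMap.fst ℝ ℝ ℝ)) q :=
  (hasFDerivAt_fst (𝕜 := ℝ) (p := q)).const_mul c

/-- **The 'infinite plate' row of Table 1: the rotating dust wall.**
On the half-plane `{x > 0}` the functions `u = 2y`, `f = x²`, `p = −x²`
satisfy the van Stockum dust equations, the companion relations
`f_x = x u_y`, `f_y = −x u_x`, and the dust density
`(f_x² + f_y²)/(x² e^p)` equals `4 e^{x²}`. -/
theorem infinite_plate_example
    (u f P : ℝ × ℝ → ℝ)
    (hu : ∀ p : ℝ × ℝ, u p = 2 * p.2)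
    (hf : ∀ p : ℝ × ℝ, f p = p.1 ^ 2)
    (hP : ∀ p : ℝ × ℝ, P p = -p.1 ^ 2) :
    ∀ p : ℝ × ℝ, 0 < p.1 →
      (pdx (pdx f) p + pdy (pdy f) p - pdx f p / p.1 = 0) ∧
      (pdx P p = ((pdy f p) ^ 2 - (pdx f p) ^ 2) / (2 * p.1)) ∧
      (pdy P p = -(pdx f p * pdy f p) / p.1) ∧
      (pdx f p = p.1 * pdy u p) ∧
      (pdy f p = -p.1 * pdx u p) ∧
      (pdx P p = -((pdx f p) ^ 2 - (pdy f p) ^ 2) / (2 * p.1)) ∧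
      (pdy P p = -(pdx f p * pdy f p) / p.1) ∧
      (((pdx f p) ^ 2 + (pdy f p) ^ 2) / (p.1 ^ 2 * Real.exp (P p)) =
        4 * Real.exp (p.1 ^ 2)) := by
  have hfe : f = fun p : ℝ × ℝ => p.1 ^ 2 := funext hf
  have hPe : P = fun p : ℝ × ℝ => -p.1 ^ 2 := funext hP
  have hue : u = fun p : ℝ × ℝ => 2 * p.2 := funext hu
  subst hfe hPe hue
  have hfx : pdx (fun p : ℝ × ℝ => p.1 ^ 2) = fun q => 2 * q.1 := by
    funext q; simp [pdx, (hasf_sq q).fderiv]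
  have hfy : pdy (fun p : ℝ × ℝ => p.1 ^ 2) = fun _ => (0:ℝ) := by
    funext q; simp [pdy, (hasf_sq q).fderiv]
  have hPx : ∀ q, pdx (fun p : ℝ × ℝ => -p.1 ^ 2) q = -(2 * q.1) := by
    intro q; simp [pdx, (hasf_nsq q).fderiv]
  have hPy : ∀ q, pdy (fun p : ℝ × ℝ => -p.1 ^ 2) q = 0 := by
    intro q; simp [pdy, (hasf_nsq q).fderiv]
  have hux : ∀ q, pdx (fun p : ℝ × ℝ => 2 * p.2) q = 0 := by
    intro q; simp [pdx, (hasf_2y q).fderiv]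
  have huy : ∀ q, pdy (fun p : ℝ × ℝ => 2 * p.2) q = 2 := by
    intro q; simp [pdy, (hasf_2y q).fderiv]
  have hfxx : ∀ q, pdx (fun q : ℝ × ℝ => 2 * q.1) q = 2 := by
    intro q; simp [pdx, (hasf_lin 2 q).fderiv]
  have hfyy : ∀ q : ℝ × ℝ, pdy (fun _ : ℝ × ℝ => (0:ℝ)) q = 0 := by
    intro q; simp [pdy]
  intro p hp
  rw [hfx, hfy, hfxx, hfyy]
  refine ⟨by field_simp; norm_num, ?_, ?_, ?_, ?_, ?_, ?_, ?_⟩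
  · rw [hPx]; field_simp; ring
  · rw [hPy]; simp
  · rw [huy]; ring
  · rw [hux]; ring
  · rw [hPx]; field_simp; ring
  · rw [hPy]; simp
  · rw [Real.exp_neg]
    rw [div_eq_iff (by positivity)]
    field_simp
    ring
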